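/- arXiv:2501.00123 — 3 statements merged into one kernel-verified Lean document; each statement's English description precedes it below -/
import Mathlib

section
/- Let L be a loop with a central involution a^* = μ(a)a. The following are equivalent: (a) μ(a)^* = μ(a) for all a; (b) μ(a)^2 = 1 for all a; (c) a^2 is symmetric (i.e., (a·a)^* = a·a) for all a. Moreover these conditions imply that every commutator [a,b] is a symmetric central element and [a,b]^2 = 1. -/
universe u

class Loop (L : Type u) extends Mul L, One L where
  ldiv : L → L → L
  rdiv : L → L → L
  mul_ldiv : ∀ a b : L, a * ldiv a b = b
  ldiv_mul : ∀ a b : L, ldiv a (a * b) = b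
  rdiv_mul : ∀ a b : L, rdiv b a * a = b
  mul_rdiv : ∀ a b : L, rdiv (b * a) a = b
  one_mul : ∀ a : L, 1 * a = a
  mul_one : ∀ a : L, a * 1 = a

section Magma
variable {M : Type u} (mul : M → M → M)

/-- Left nucleus of a magma. -/
def leftNucS : Set M := {a | ∀ x y, mul (mul a x) y = mul a (mul x y)}
/-- Middle nucleus of a magma. -/
def midNucS : Set M := {a | ∀ x y, mul (mul x a) y = mul x (mul a y)}
/-- Right nucleus of a magma. -/
def rightNucS : Set M := {a | ∀ x y, mul (mul x y) a = mul x (mul y a)}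
/-- Nucleus of a magma. -/
def nucS : Set M := leftNucS mul ∩ midNucS mul ∩ rightNucS mul
/-- Commutant (commutative center) of a magma. -/
def commutantS : Set M := {a | ∀ x, mul a x = mul x a}
/-- Center of a magma: the commutant intersected with the nucleus. -/
def centerS : Set M := commutantS mul ∩ nucS mul
end Magma

namespace Loop
variable {L : Type u} [Loop L]

/-- The left inverse `a^λ`, satisfying `a^λ * a = 1`. -/
def linv (a : L) : L := Loop.rdiv 1 a
/-- The right inverse `a^ρ`, satisfying `a * a^ρ = 1`. -/
def rinv (a : L) : L := Loop.ldiv a 1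
/-- The commutator `[a,b]`, defined by `a*b = (b*a)*[a,b]`. -/
def comm (a b : L) : L := Loop.ldiv (b*a) (a*b)
/-- The associator `[a,b,c]`, defined by `(a*b)*c = (a*(b*c))*[a,b,c]`. -/
def assoc (a b c : L) : L := Loop.ldiv (a*(b*c)) ((a*b)*c)

end Loop

/-- The nucleus of a loop. -/
abbrev LNuc (L : Type u) [Loop L] : Set L := nucS (fun x y : L => x * y)
/-- The commutant of a loop. -/
abbrev LCommutant (L : Type u) [Loop L] : Set L := commutantS (fun x y : L => x * y)
/-- The center of a loop. -/
abbrev LCenter (L : Type u) [Loop L] : Set L := centerS (fun x y : L => x * y)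

section Helpers
variable {L : Type u} [Loop L]

lemma loop_lcancel {a x y : L} (h : a * x = a * y) : x = y := by
  have := congrArg (Loop.ldiv a) h
  rwa [Loop.ldiv_mul, Loop.ldiv_mul] at this

lemma loop_rcancel {a x y : L} (h : x * a = y * a) : x = y := by
  have := congrArg (fun z => Loop.rdiv z a) h
  simpa [Loop.mul_rdiv] using this

lemma cen_comm {z : L} (h : z ∈ LCenter L) (x : L) : z * x = x * z := h.1 x

lemma cen_ln {z : L} (h : z ∈ LCenter L) (x y : L) :
    (z * x) * y = z * (x * y) := h.2.1.1 x y

lemma cen_mn {z : L} (h : z ∈ LCenter L) (x y : L) :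
    (x * z) * y = x * (z * y) := h.2.1.2 x y

lemma cen_rn {z : L} (h : z ∈ LCenter L) (x y : L) :
    (x * y) * z = x * (y * z) := h.2.2 x y

/-- Exchange law: for central `x`, `y` we have `(x*u)*(y*v) = (x*y)*(u*v)`. -/
lemma cen_exch {x y : L} (hx : x ∈ LCenter L) (hy : y ∈ LCenter L) (u v : L) :
    (x * u) * (y * v) = (x * y) * (u * v) := by
  calc (x * u) * (y * v) = x * (u * (y * v)) := cen_ln hx _ _
    _ = x * ((u * y) * v) := by rw [cen_mn hy]
    _ = x * ((y * u) * v) := by rw [← cen_comm hy u]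
    _ = x * (y * (u * v)) := by rw [cen_ln hy]
    _ = (x * y) * (u * v) := (cen_ln hx _ _).symm

/-- The center is closed under multiplication. -/
lemma cen_mul {z w : L} (hz : z ∈ LCenter L) (hw : w ∈ LCenter L) :
    z * w ∈ LCenter L := by
  refine ⟨fun x => ?_, ⟨fun x y => ?_, fun x y => ?_⟩, fun x y => ?_⟩
  · show (z * w) * x = x * (z * w)
    calc (z * w) * x = z * (w * x) := cen_ln hz _ _
      _ = z * (x * w) := by rw [cen_comm hw]
      _ = (z * x) * w := (cen_ln hz _ _).symm
      _ = (x * z) * w := by rw [cen_comm hz]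
      _ = x * (z * w) := cen_mn hz _ _
  · show ((z * w) * x) * y = (z * w) * (x * y)
    calc ((z * w) * x) * y = (z * (w * x)) * y := by rw [cen_ln hz]
      _ = z * ((w * x) * y) := cen_ln hz _ _
      _ = z * (w * (x * y)) := by rw [cen_ln hw]
      _ = (z * w) * (x * y) := (cen_ln hz _ _).symm
  · show (x * (z * w)) * y = x * ((z * w) * y)
    calc (x * (z * w)) * y = ((x * z) * w) * y := by rw [cen_mn hz]
      _ = (x * z) * (w * y) := cen_mn hw _ _
      _ = x * (z * (w * y)) := cen_mn hz _ _
      _ = x * ((z * w) * y) := by rw [cen_ln hz]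
  · show (x * y) * (z * w) = x * (y * (z * w))
    calc (x * y) * (z * w) = ((x * y) * z) * w := (cen_mn hz _ _).symm
      _ = (x * (y * z)) * w := by rw [cen_rn hz]
      _ = x * ((y * z) * w) := cen_rn hw _ _
      _ = x * (y * (z * w)) := by rw [cen_mn hz]

end Helpers

/-- For a central involution `a^* = μ(a)·a`, the conditions
(a) `μ(a)^* = μ(a)`, (b) `μ(a)² = 1`, (c) `(a²)^* = a²` are equivalent,
and they imply that every commutator is a symmetric central element of order
at most `2`. -/
theorem stmt7 {L : Type u} [Loop L] (star : L → L)
    (hstar2 : ∀ a : L, star (star a) = a)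
    (hanti : ∀ a b : L, star (a * b) = star b * star a)
    (μ : L → L)
    (hcen : ∀ a : L, μ a ∈ LCenter L)
    (hμ : ∀ a : L, star a = μ a * a) :
    ((∀ a : L, star (μ a) = μ a) ↔ (∀ a : L, μ a * μ a = 1)) ∧
    ((∀ a : L, μ a * μ a = 1) ↔ (∀ a : L, star (a * a) = a * a)) ∧
    ((∀ a : L, star (μ a) = μ a) →
      ∀ a b : L, Loop.comm a b ∈ LCenter L ∧ star (Loop.comm a b) = Loop.comm a b ∧
        Loop.comm a b * Loop.comm a b = 1) := by
  -- star (μ a) is central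
  have hscen : ∀ a : L, star (μ a) ∈ LCenter L := by
    intro a
    rw [hμ]
    exact cen_mul (hcen (μ a)) (hcen a)
  -- key identity: μ a * star (μ a) = 1
  have hkey : ∀ a : L, μ a * star (μ a) = 1 := by
    intro a
    refine loop_rcancel (a := a) ?_
    calc (μ a * star (μ a)) * a
        = (μ a * star (μ a)) * (a * 1) := by rw [Loop.mul_one]
      _ = (μ a * a) * (star (μ a) * 1) := (cen_exch (hcen a) (hscen a) a 1).symm
      _ = (μ a * a) * star (μ a) := by rw [Loop.mul_one]
      _ = star a * star (μ a) := by rw [← hμ]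
      _ = star (μ a * a) := (hanti (μ a) a).symm
      _ = star (star a) := by rw [← hμ]
      _ = a := hstar2 a
      _ = 1 * a := (Loop.one_mul a).symm
  -- squares: star (a*a) = (μ a * μ a) * (a*a)
  have hsq : ∀ a : L, star (a * a) = (μ a * μ a) * (a * a) := by
    intro a
    calc star (a * a) = star a * star a := hanti a a
      _ = (μ a * a) * (μ a * a) := by rw [hμ]
      _ = (μ a * μ a) * (a * a) := cen_exch (hcen a) (hcen a) a a
  have hab : (∀ a : L, star (μ a) = μ a) ↔ (∀ a : L, μ a * μ a = 1) := by
    constructor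
    · intro h a
      have := hkey a
      rwa [h] at this
    · intro h a
      exact loop_lcancel ((hkey a).trans (h a).symm)
  refine ⟨hab, ?_, ?_⟩
  · constructor
    · intro h a
      rw [hsq a, h a, Loop.one_mul]
    · intro h a
      refine loop_rcancel (a := a * a) ?_
      calc (μ a * μ a) * (a * a) = star (a * a) := (hsq a).symm
        _ = a * a := h a
        _ = 1 * (a * a) := (Loop.one_mul _).symm
  · intro ha a b
    have hb : ∀ a : L, μ a * μ a = 1 := hab.mp ha
    have hn : (μ b * μ a) ∈ LCenter L := cen_mul (hcen b) (hcen a)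
    have hm : μ (a * b) ∈ LCenter L := hcen (a * b)
    have hmn : (μ (a * b) * (μ b * μ a)) ∈ LCenter L := cen_mul hm hn
    have heq : μ (a * b) * (a * b) = (μ b * μ a) * (b * a) := by
      calc μ (a * b) * (a * b) = star (a * b) := (hμ (a * b)).symm
        _ = star b * star a := hanti a b
        _ = (μ b * b) * (μ a * a) := by rw [hμ, hμ]
        _ = (μ b * μ a) * (b * a) := cen_exch (hcen b) (hcen a) b a
    have hcval : (b * a) * (μ (a * b) * (μ b * μ a)) = a * b := by
      calc (b * a) * (μ (a * b) * (μ b * μ a))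
          = (μ (a * b) * (μ b * μ a)) * (b * a) := (cen_comm hmn _).symm
        _ = μ (a * b) * ((μ b * μ a) * (b * a)) := cen_ln hm _ _
        _ = μ (a * b) * (μ (a * b) * (a * b)) := by rw [← heq]
        _ = (μ (a * b) * μ (a * b)) * (a * b) := (cen_ln hm _ _).symm
        _ = 1 * (a * b) := by rw [hb (a * b)]
        _ = a * b := Loop.one_mul _
    have hcomm : Loop.comm a b = μ (a * b) * (μ b * μ a) := by
      have h := Loop.ldiv_mul (b * a) (μ (a * b) * (μ b * μ a))
      rw [hcval] at h
      exact h
    refine ⟨?_, ?_, ?_⟩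
    · rw [hcomm]; exact hmn
    · rw [hcomm]
      calc star (μ (a * b) * (μ b * μ a))
          = star (μ b * μ a) * star (μ (a * b)) := hanti _ _
        _ = star (μ b * μ a) * μ (a * b) := by rw [ha (a * b)]
        _ = (star (μ a) * star (μ b)) * μ (a * b) := by rw [hanti (μ b) (μ a)]
        _ = (μ a * μ b) * μ (a * b) := by rw [ha a, ha b]
        _ = (μ b * μ a) * μ (a * b) := by rw [cen_comm (hcen a) (μ b)]
        _ = μ (a * b) * (μ b * μ a) := (cen_comm hm _).symm
    · rw [hcomm]
      calc (μ (a * b) * (μ b * μ a)) * (μ (a * b) * (μ b * μ a))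
          = (μ (a * b) * μ (a * b)) * ((μ b * μ a) * (μ b * μ a)) :=
            cen_exch hm hm _ _
        _ = 1 * ((μ b * μ a) * (μ b * μ a)) := by rw [hb (a * b)]
        _ = (μ b * μ a) * (μ b * μ a) := Loop.one_mul _
        _ = (μ b * μ b) * (μ a * μ a) := cen_exch (hcen b) (hcen b) _ _
        _ = 1 * 1 := by rw [hb a, hb b]
        _ = 1 := Loop.one_mul 1
end

section
/- Let (L,*) be a loop with involution and γ a central element. Then the Cayley-Dickson double D(L,*,γ) = L ∪ Lj, with multiplication a(bj) = (ba)j, (aj)b = (ab^*)j, (aj)(bj) = γ b^* a, is a loop, with one-sided inverses (aj)^λ = (γ^{-1}(a^λ)^*)j and (aj)^ρ = ((γ^*)^{-1}(a^λ)^*)j. Consequently, D(L,*,γ) has well-defined inverses if and only if L has well-defined inverses and γ^* = γ. -/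
universe u

/-- Multiplication of the Cayley–Dickson double `D(L,*,γ) = L ∪ Lj`,
encoded on `L × Bool` with `(a, false) = a` and `(a, true) = a·j`. -/
def CDmul {L : Type u} [Loop L] (star : L → L) (γ : L) :
    L × Bool → L × Bool → L × Bool
  | (a, false), (b, false) => (a * b, false)
  | (a, false), (b, true)  => (b * a, true)
  | (a, true),  (b, false) => (a * star b, true)
  | (a, true),  (b, true)  => (γ * (star b * a), false)


section Aux
variable {L : Type u} [Loop L]

theorem ldiv_unique (a z b : L) (h : a * z = b) : z = Loop.ldiv a b := by
  rw [← h, Loop.ldiv_mul]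

theorem rdiv_unique (a z b : L) (h : z * a = b) : z = Loop.rdiv b a := by
  rw [← h, Loop.mul_rdiv]

theorem linv_mul (a : L) : Loop.linv a * a = 1 := Loop.rdiv_mul a 1

theorem mul_rinv (a : L) : a * Loop.rinv a = 1 := Loop.mul_ldiv a 1

theorem linv_one : Loop.linv (1 : L) = 1 :=
  (rdiv_unique 1 1 1 (Loop.one_mul 1)).symm

theorem my_star_one (star : L → L) (hanti : ∀ a b : L, star (a * b) = star b * star a) :
    star (1 : L) = 1 := by
  have h1 : star (1:L) * star 1 = star 1 := by
    rw [← hanti]; rw [Loop.one_mul]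
  have h2 : star (1:L) = Loop.ldiv (star (1:L)) (star 1) :=
    ldiv_unique _ _ _ h1
  have h3 : (1:L) = Loop.ldiv (star (1:L)) (star 1) :=
    ldiv_unique _ _ _ (Loop.mul_one _)
  rw [h2, ← h3]

end Aux

/-- The Cayley–Dickson double `D(L,*,γ)` is a loop with the stated one-sided
inverses, and has well-defined inverses iff `L` does and `γ^* = γ`. -/
theorem stmt10 {L : Type u} [Loop L] (star : L → L)
    (hstar2 : ∀ a : L, star (star a) = a)
    (hanti : ∀ a b : L, star (a * b) = star b * star a)
    (γ : L) (hγ : γ ∈ LCenter L) :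
    (∀ x : L × Bool, CDmul star γ ((1 : L), false) x = x ∧
      CDmul star γ x ((1 : L), false) = x) ∧
    (∀ x y : L × Bool, ∃! z : L × Bool, CDmul star γ x z = y) ∧
    (∀ x y : L × Bool, ∃! z : L × Bool, CDmul star γ z x = y) ∧
    (∀ a : L, CDmul star γ (Loop.rinv γ * star (Loop.linv a), true) (a, true)
        = ((1 : L), false)) ∧
    (∀ a : L, CDmul star γ (a, true) (Loop.rinv (star γ) * star (Loop.linv a), true)
        = ((1 : L), false)) ∧
    ((∀ x u v : L × Bool, CDmul star γ u x = ((1 : L), false) →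
        CDmul star γ x v = ((1 : L), false) → u = v) ↔
      ((∀ a : L, Loop.linv a = Loop.rinv a) ∧ star γ = γ)) := by
  obtain ⟨hc, ⟨hl, hm⟩, hr⟩ := hγ
  simp only [commutantS, leftNucS, midNucS, rightNucS, Set.mem_setOf_eq] at hc hl hm hr
  have s1 : star (1:L) = 1 := my_star_one star hanti
  have key1 : ∀ x y : L, γ * (x * (Loop.rinv γ * y)) = x * y := by
    intro x y
    rw [← hl, hc x, hm, ← hl, mul_rinv, Loop.one_mul]
  have hd : γ * star (Loop.rinv (star γ)) = 1 := by
    have h1 : star (Loop.rinv (star γ)) * γ = 1 := by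
      have h := congrArg star (mul_rinv (star γ))
      rwa [hanti, hstar2, s1] at h
    rw [hc]; exact h1
  have key2 : ∀ x y : L, γ * ((x * star (Loop.rinv (star γ))) * y) = x * y := by
    intro x y
    rw [← hl, ← hl, hc x, hm, hd, Loop.mul_one]
  have part1 : ∀ x : L × Bool, CDmul star γ ((1:L), false) x = x ∧
      CDmul star γ x ((1:L), false) = x := by
    rintro ⟨a, (_|_)⟩ <;> constructor <;>
      simp [CDmul, Loop.one_mul, Loop.mul_one, s1]
  have part2 : ∀ x y : L × Bool, ∃! z : L × Bool, CDmul star γ x z = y := by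
    rintro ⟨a, (_|_)⟩ ⟨b, (_|_)⟩
    · refine ⟨(Loop.ldiv a b, false), ?_, ?_⟩
      · show (a * Loop.ldiv a b, false) = _; rw [Loop.mul_ldiv]
      · rintro ⟨c, (_|_)⟩ h <;> simp [CDmul] at h
        rw [ldiv_unique a c b h]
    · refine ⟨(Loop.rdiv b a, true), ?_, ?_⟩
      · show (Loop.rdiv b a * a, true) = _; rw [Loop.rdiv_mul]
      · rintro ⟨c, (_|_)⟩ h <;> simp [CDmul] at h
        rw [rdiv_unique a c b h]
    · refine ⟨(star (Loop.rdiv (Loop.ldiv γ b) a), true), ?_, ?_⟩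
      · show (γ * (star (star (Loop.rdiv (Loop.ldiv γ b) a)) * a), false) = _
        rw [hstar2, Loop.rdiv_mul, Loop.mul_ldiv]
      · rintro ⟨c, (_|_)⟩ h <;> simp [CDmul] at h
        have h1 : star c * a = Loop.ldiv γ b := ldiv_unique γ _ b h
        have h2 : star c = Loop.rdiv (Loop.ldiv γ b) a := rdiv_unique a _ _ h1
        rw [← hstar2 c, h2]
    · refine ⟨(star (Loop.ldiv a b), false), ?_, ?_⟩
      · show (a * star (star (Loop.ldiv a b)), true) = _
        rw [hstar2, Loop.mul_ldiv]
      · rintro ⟨c, (_|_)⟩ h <;> simp [CDmul] at h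
        rw [← hstar2 c, ldiv_unique a (star c) b h]
  have part3 : ∀ x y : L × Bool, ∃! z : L × Bool, CDmul star γ z x = y := by
    rintro ⟨a, (_|_)⟩ ⟨b, (_|_)⟩
    · refine ⟨(Loop.rdiv b a, false), ?_, ?_⟩
      · show (Loop.rdiv b a * a, false) = _; rw [Loop.rdiv_mul]
      · rintro ⟨c, (_|_)⟩ h <;> simp [CDmul] at h
        rw [rdiv_unique a c b h]
    · refine ⟨(Loop.rdiv b (star a), true), ?_, ?_⟩
      · show (Loop.rdiv b (star a) * star a, true) = _; rw [Loop.rdiv_mul]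
      · rintro ⟨c, (_|_)⟩ h <;> simp [CDmul] at h
        rw [rdiv_unique (star a) c b h]
    · refine ⟨(Loop.ldiv (star a) (Loop.ldiv γ b), true), ?_, ?_⟩
      · show (γ * (star a * Loop.ldiv (star a) (Loop.ldiv γ b)), false) = _
        rw [Loop.mul_ldiv, Loop.mul_ldiv]
      · rintro ⟨c, (_|_)⟩ h <;> simp [CDmul] at h
        have h1 : star a * c = Loop.ldiv γ b := ldiv_unique γ _ b h
        rw [ldiv_unique (star a) c _ h1]
    · refine ⟨(Loop.ldiv a b, false), ?_, ?_⟩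
      · show (a * Loop.ldiv a b, true) = _; rw [Loop.mul_ldiv]
      · rintro ⟨c, (_|_)⟩ h <;> simp [CDmul] at h
        rw [ldiv_unique a c b h]
  have part4 : ∀ a : L, CDmul star γ (Loop.rinv γ * star (Loop.linv a), true) (a, true)
      = ((1:L), false) := by
    intro a
    show (γ * (star a * (Loop.rinv γ * star (Loop.linv a))), false) = _
    rw [key1, ← hanti, linv_mul, s1]
  have part5 : ∀ a : L, CDmul star γ (a, true)
      (Loop.rinv (star γ) * star (Loop.linv a), true) = ((1:L), false) := by
    intro a
    show (γ * (star (Loop.rinv (star γ) * star (Loop.linv a)) * a), false) = _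
    rw [hanti, hstar2, key2, linv_mul]
  refine ⟨part1, part2, part3, part4, part5, ?_⟩
  constructor
  · intro H
    constructor
    · intro a
      have hu : CDmul star γ (Loop.linv a, false) (a, false) = ((1:L), false) := by
        show (Loop.linv a * a, false) = _; rw [linv_mul]
      have hv : CDmul star γ (a, false) (Loop.rinv a, false) = ((1:L), false) := by
        show (a * Loop.rinv a, false) = _; rw [mul_rinv]
      exact congrArg Prod.fst (H _ _ _ hu hv)
    · have hu := part4 1
      have hv := part5 1
      rw [linv_one, s1, Loop.mul_one] at hu hv
      have h : Loop.rinv γ = Loop.rinv (star γ) := congrArg Prod.fst (H ((1:L), true) _ _ hu hv)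
      have hh1 : star γ * Loop.rinv γ = 1 := by
        simp only [h]; exact mul_rinv (star γ)
      exact (rdiv_unique _ _ _ hh1).trans (rdiv_unique _ _ _ (mul_rinv γ)).symm
  · rintro ⟨h1, h2⟩ x u v hu hv
    obtain ⟨a, (_|_)⟩ := x
    · have hw1 : CDmul star γ (Loop.linv a, false) (a, false) = ((1:L), false) := by
        show (Loop.linv a * a, false) = _; rw [linv_mul]
      have hw2 : CDmul star γ (a, false) (Loop.linv a, false) = ((1:L), false) := by
        show (a * Loop.linv a, false) = _; rw [h1, mul_rinv]
      exact (((part3 (a, false) ((1:L), false)).unique hu hw1)).trans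
        (((part2 (a, false) ((1:L), false)).unique hw2 hv))
    · have hw1 := part4 a
      have hw2 := part5 a
      rw [h2] at hw2
      exact (((part3 (a, true) ((1:L), false)).unique hu hw1)).trans
        (((part2 (a, true) ((1:L), false)).unique hw2 hv))
end

section
/- Let (L,*) be a loop with a non-identity involution, γ central, and M = D(L,*,γ). Then Z(M) = Z(L,*), the set of symmetric central elements of L. If instead * is the identity on L, then Z(D(L,id,γ)) = Z(L) ∪ Z(L)j = D(Z(L), id, γ). -/
universe u

section Helpers
variable {L : Type u} [Loop L]

lemma lcancel {a b c : L} (h : a * b = a * c) : b = c := by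
  have h2 := congrArg (Loop.ldiv a) h
  rwa [Loop.ldiv_mul, Loop.ldiv_mul] at h2

lemma cent_comm {c : L} (h : c ∈ LCenter L) : ∀ x, c * x = x * c := h.1
lemma cent_l {c : L} (h : c ∈ LCenter L) : ∀ x y, (c*x)*y = c*(x*y) := h.2.1.1
lemma cent_m {c : L} (h : c ∈ LCenter L) : ∀ x y, (x*c)*y = x*(c*y) := h.2.1.2
lemma cent_r {c : L} (h : c ∈ LCenter L) : ∀ x y, (x*y)*c = x*(y*c) := h.2.2

/-- normalization: move a central element to the front -/
lemma ce1 {c : L} (h : c ∈ LCenter L) (x : L) : x * c = c * x :=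
  (cent_comm h x).symm

lemma ce2 {c : L} (h : c ∈ LCenter L) (x y : L) :
    x * (c * y) = c * (x * y) := by
  rw [← cent_m h, ce1 h, cent_l h]

lemma ce3 {c : L} (h : c ∈ LCenter L) (x y : L) :
    (c * x) * y = c * (x * y) := cent_l h x y

lemma mk_center {c : L} (h1 : ∀ x, c*x = x*c)
    (h2 : ∀ x y, (c*x)*y = c*(x*y)) (h3 : ∀ x y, (x*c)*y = x*(c*y))
    (h4 : ∀ x y, (x*y)*c = x*(y*c)) : c ∈ LCenter L :=
  ⟨h1, ⟨h2, h3⟩, h4⟩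

end Helpers

section Main
variable {L : Type u} [Loop L] (star : L → L) (γ : L)

lemma mem_center_false_iff
    (hstar2 : ∀ a : L, star (star a) = a)
    (hanti : ∀ a b : L, star (a * b) = star b * star a)
    (hγ : γ ∈ LCenter L) (c : L) :
    (c, false) ∈ centerS (CDmul star γ) ↔ c ∈ LCenter L ∧ star c = c := by
  constructor
  · rintro ⟨hcom, ⟨hl, hm⟩, hr⟩
    have hsc : star c = c := by
      have h := hcom (1, true)
      simp [CDmul, Loop.one_mul] at h
      exact h.symm
    refine ⟨mk_center ?_ ?_ ?_ ?_, hsc⟩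
    · intro x
      have h := hcom (x, false)
      simpa [CDmul] using h
    · intro x y
      have h := hl (x, false) (y, false)
      simpa [CDmul] using h
    · intro x y
      have h := hm (x, false) (y, false)
      simpa [CDmul] using h
    · intro x y
      have h := hr (x, false) (y, false)
      simpa [CDmul] using h
  · rintro ⟨hc, hsc⟩
    refine ⟨?_, ⟨?_, ?_⟩, ?_⟩
    · rintro ⟨b, (_|_)⟩ <;> simp [CDmul, hsc] <;>
        (try simp only [ce1 hc, ce2 hc, ce3 hc]) <;> (try rfl)
    · rintro ⟨b, (_|_)⟩ ⟨d, (_|_)⟩ <;> simp [CDmul, hanti, hsc, hstar2] <;>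
        (try simp only [ce1 hc, ce2 hc, ce3 hc]) <;>
        (try simp only [ce1 hγ, ce2 hγ, ce3 hγ]) <;> (try rfl)
    · rintro ⟨b, (_|_)⟩ ⟨d, (_|_)⟩ <;> simp [CDmul, hanti, hsc, hstar2] <;>
        (try simp only [ce1 hc, ce2 hc, ce3 hc]) <;>
        (try simp only [ce1 hγ, ce2 hγ, ce3 hγ]) <;> (try rfl)
    · rintro ⟨b, (_|_)⟩ ⟨d, (_|_)⟩ <;> simp [CDmul, hanti, hsc, hstar2] <;>
        (try simp only [ce1 hc, ce2 hc, ce3 hc]) <;>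
        (try simp only [ce1 hγ, ce2 hγ, ce3 hγ]) <;> (try rfl)

lemma mem_center_true_iff
    (hstar2 : ∀ a : L, star (star a) = a)
    (hanti : ∀ a b : L, star (a * b) = star b * star a)
    (hγ : γ ∈ LCenter L) (c : L) :
    (c, true) ∈ centerS (CDmul star γ) ↔ (∀ a : L, star a = a) ∧ c ∈ LCenter L := by
  constructor
  · rintro ⟨hcom, ⟨hl, hm⟩, hr⟩
    have hs : ∀ a : L, star a = a := by
      intro a
      have h := hcom (a, false)
      simp [CDmul] at h
      exact lcancel h
    have hcomm : ∀ a b : L, a * b = b * a := by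
      intro a b
      have h := hanti a b
      rw [hs, hs, hs] at h
      exact h
    refine ⟨hs, mk_center (fun x => hcomm c x) ?_ ?_ ?_⟩
    · intro x y
      have h := hl (x, false) (y, false)
      simpa [CDmul, hs] using h
    · intro x y
      have h := hm (x, false) (y, false)
      simp [CDmul, hs] at h
      -- h : (c*x)*y = (c*y)*x ; want (x*c)*y = x*(c*y)
      rw [hcomm x c, h, hcomm (c*y) x]
    · intro x y
      have h := hr (x, false) (y, false)
      simp [CDmul, hs] at h
      -- h : c*(x*y) = (c*y)*x ; want (x*y)*c = x*(y*c)
      rw [hcomm (x*y) c, h, hcomm (c*y) x, hcomm c y]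
  · rintro ⟨hs, hc⟩
    have hcomm : ∀ a b : L, a * b = b * a := by
      intro a b
      have h := hanti a b
      rw [hs, hs, hs] at h
      exact h
    refine ⟨?_, ⟨?_, ?_⟩, ?_⟩
    · rintro ⟨b, (_|_)⟩ <;> simp [CDmul, hs] <;>
        (try simp only [ce1 hc, ce2 hc, ce3 hc]) <;>
        (try simp only [ce1 hγ, ce2 hγ, ce3 hγ]) <;>
        (try rw [hcomm b d]) <;> (try rw [hcomm d b]) <;> (try rfl)
    · rintro ⟨b, (_|_)⟩ ⟨d, (_|_)⟩ <;> simp [CDmul, hs] <;>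
        (try simp only [ce1 hc, ce2 hc, ce3 hc]) <;>
        (try simp only [ce1 hγ, ce2 hγ, ce3 hγ]) <;>
        (try rw [hcomm b d]) <;> (try rw [hcomm d b]) <;> (try rfl)
    · rintro ⟨b, (_|_)⟩ ⟨d, (_|_)⟩ <;> simp [CDmul, hs] <;>
        (try simp only [ce1 hc, ce2 hc, ce3 hc]) <;>
        (try simp only [ce1 hγ, ce2 hγ, ce3 hγ]) <;>
        (try rw [hcomm b d]) <;> (try rw [hcomm d b]) <;> (try rfl)
    · rintro ⟨b, (_|_)⟩ ⟨d, (_|_)⟩ <;> simp [CDmul, hs] <;>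
        (try simp only [ce1 hc, ce2 hc, ce3 hc]) <;>
        (try simp only [ce1 hγ, ce2 hγ, ce3 hγ]) <;>
        (try rw [hcomm b d]) <;> (try rw [hcomm d b]) <;> (try rfl)

end Main

/-- Center of the double: if `*` is not the identity then
`Z(D(L,*,γ)) = Z(L,*)` (the symmetric central elements of `L`), while if `*`
is the identity then `Z(D(L,id,γ)) = Z(L) ∪ Z(L)j`. -/
theorem stmt15 {L : Type u} [Loop L] (star : L → L)
    (hstar2 : ∀ a : L, star (star a) = a)
    (hanti : ∀ a b : L, star (a * b) = star b * star a)
    (γ : L) (hγ : γ ∈ LCenter L) :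
    (¬ (∀ a : L, star a = a) →
      centerS (CDmul star γ)
        = {x : L × Bool | ∃ a : L, a ∈ LCenter L ∧ star a = a ∧ x = (a, false)}) ∧
    ((∀ a : L, star a = a) →
      centerS (CDmul star γ) = {x : L × Bool | x.1 ∈ LCenter L}) := by
  constructor
  · intro hne
    ext ⟨a, (_|_)⟩ <;>
      simp [mem_center_false_iff star γ hstar2 hanti hγ,
            mem_center_true_iff star γ hstar2 hanti hγ, hne]
  · intro hs
    ext ⟨a, (_|_)⟩ <;>
      simp [mem_center_false_iff star γ hstar2 hanti hγ,
            mem_center_true_iff star γ hstar2 hanti hγ, hs]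
end
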